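/- Let z : ℤ → ℝ → ℝ be a family of differentiable functions with z_{n+1}(t) ≠ z_n(t) for all n, t, satisfying for all n ∈ ℤ and t ∈ ℝ the equation ż_n = −z_n [ z_{n+1}/((z_{n+2} − z_{n+1})(z_{n+1} − z_n)) + z_n/((z_{n+1} − z_n)(z_n − z_{n−1})) + z_{n−1}/((z_n − z_{n−1})(z_{n−1} − z_{n−2})) ]. Define u_n(t) = z_{n+2}(t) z_{n+1}(t) / ((z_{n+3}(t) − z_{n+2}(t))(z_{n+2}(t) − z_{n+1}(t))(z_{n+1}(t) − z_n(t))). Then for all n ∈ ℤ and t ∈ ℝ, u̇_n = u_n (u_{n+2} + u_{n+1} − u_{n−1} − u_{n−2}), i.e., u solves the INB equation. -/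

import Mathlib

/-- The core algebraic identity behind the Miura-type transformation into the INB
equation. Variables `a..h` stand for `z (n-2) t, ..., z (n+5) t`, and `dc, dd, de, df`
for the time derivatives of `z n, z (n+1), z (n+2), z (n+3)`. -/
theorem inb_key (a b c d e f g h : ℝ)
    (h1 : d - c ≠ 0) (h2 : e - d ≠ 0) (h3 : f - e ≠ 0) (h4 : g - f ≠ 0)
    (h5 : h - g ≠ 0) (h6 : c - b ≠ 0) (h7 : b - a ≠ 0)
    (dc : ℝ) (dd : ℝ) (de : ℝ) (df : ℝ)
    (hdc : dc = -c * (d / ((e - d) * (d - c)) + c / ((d - c) * (c - b)) + b / ((c - b) * (b - a))))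
    (hdd : dd = -d * (e / ((f - e) * (e - d)) + d / ((e - d) * (d - c)) + c / ((d - c) * (c - b))))
    (hde : de = -e * (f / ((g - f) * (f - e)) + e / ((f - e) * (e - d)) + d / ((e - d) * (d - c))))
    (hdf : df = -f * (g / ((h - g) * (g - f)) + f / ((g - f) * (f - e)) + e / ((f - e) * (e - d)))) :
    e * d / ((f - e) * (e - d) * (d - c))
      * (g * f / ((h - g) * (g - f) * (f - e))
        + f * e / ((g - f) * (f - e) * (e - d))
        - d * c / ((e - d) * (d - c) * (c - b))
        - c * b / ((d - c) * (c - b) * (b - a)))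
    = ((de * d + e * dd) * ((f - e) * (e - d) * (d - c))
      - e * d * (((df - de) * (e - d) + (f - e) * (de - dd)) * (d - c)
          + (f - e) * (e - d) * (dd - dc)))
      / ((f - e) * (e - d) * (d - c)) ^ 2 := by
  set Ab := b / ((c - b) * (b - a)) with hAb
  set Ac := c / ((d - c) * (c - b)) with hAc
  set Ad := d / ((e - d) * (d - c)) with hAd
  set Ae := e / ((f - e) * (e - d)) with hAe
  set Af := f / ((g - f) * (f - e)) with hAf
  set Ag := g / ((h - g) * (g - f)) with hAg
  have hnum : de * d + e * dd = -(e * d) * (Af + 2 * Ae + 2 * Ad + Ac) := by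
    rw [hde, hdd]; ring
  have hDp : ((df - de) * (e - d) + (f - e) * (de - dd)) * (d - c)
      + (f - e) * (e - d) * (dd - dc)
      = -((f - e) * (e - d) * (d - c)) * (Af + 2 * Ae + 2 * Ad + Ac)
        + ((e * Ad - f * Ag) * (e - d) * (d - c) + (f - e) * (d * Ac - e * Af) * (d - c)
          + (f - e) * (e - d) * (c * Ab - d * Ae)) := by
    rw [hdc, hdd, hde, hdf]; ring
  have t1 : (f * Ag - e * Ad) / (f - e)
      = g * f / ((h - g) * (g - f) * (f - e)) - e * d / ((f - e) * (e - d) * (d - c)) := by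
    rw [hAg, hAd]; field_simp
  have t2 : (e * Af - d * Ac) / (e - d)
      = f * e / ((g - f) * (f - e) * (e - d)) - d * c / ((e - d) * (d - c) * (c - b)) := by
    rw [hAf, hAc]; field_simp
  have t3 : (d * Ae - c * Ab) / (d - c)
      = e * d / ((f - e) * (e - d) * (d - c)) - c * b / ((d - c) * (c - b) * (b - a)) := by
    rw [hAe, hAb]; field_simp
  have hsum : (f * Ag - e * Ad) / (f - e) + (e * Af - d * Ac) / (e - d)
        + (d * Ae - c * Ab) / (d - c)
      = g * f / ((h - g) * (g - f) * (f - e))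
        + f * e / ((g - f) * (f - e) * (e - d))
        - d * c / ((e - d) * (d - c) * (c - b))
        - c * b / ((d - c) * (c - b) * (b - a)) := by
    rw [t1, t2, t3]; ring
  rw [hnum, hDp, ← hsum]
  field_simp
  ring

/-- Equation `żₙ = −zₙ(T+1+T⁻¹)[zₙ/((z_{n+1}−zₙ)(zₙ−z_{n−1}))]` is transformed into
the INB equation by `uₙ = z_{n+2} z_{n+1} / ((z_{n+3}−z_{n+2})(z_{n+2}−z_{n+1})(z_{n+1}−zₙ))`. -/
theorem stmt_16 (z : ℤ → ℝ → ℝ)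
    (hzne : ∀ (n : ℤ) (t : ℝ), z (n + 1) t ≠ z n t)
    (hz : ∀ (n : ℤ) (t : ℝ), HasDerivAt (z n)
      (-(z n t) * (z (n + 1) t / ((z (n + 2) t - z (n + 1) t) * (z (n + 1) t - z n t))
        + z n t / ((z (n + 1) t - z n t) * (z n t - z (n - 1) t))
        + z (n - 1) t / ((z n t - z (n - 1) t) * (z (n - 1) t - z (n - 2) t)))) t)
    (u : ℤ → ℝ → ℝ)
    (hu : ∀ (n : ℤ) (t : ℝ),
      u n t = z (n + 2) t * z (n + 1) t
        / ((z (n + 3) t - z (n + 2) t) * (z (n + 2) t - z (n + 1) t) * (z (n + 1) t - z n t))) :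
    ∀ (n : ℤ) (t : ℝ), HasDerivAt (u n)
      (u n t * (u (n + 2) t + u (n + 1) t - u (n - 1) t - u (n - 2) t)) t := by
  intro n t
  have hne : ∀ m : ℤ, ∀ s : ℝ, z (m + 1) s - z m s ≠ 0 := fun m s =>
    sub_ne_zero.mpr (hzne m s)
  have hufun : u n = fun s => z (n + 2) s * z (n + 1) s /
      ((z (n + 3) s - z (n + 2) s) * (z (n + 2) s - z (n + 1) s) * (z (n + 1) s - z n s)) :=
    funext fun s => hu n s
  -- derivative hypotheses with normalized indices
  have h0 := hz n t
  have h1 := hz (n + 1) t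
  have h2 := hz (n + 2) t
  have h3 := hz (n + 3) t
  rw [show n + 1 + 1 = n + 2 by ring, show n + 1 + 2 = n + 3 by ring,
    show n + 1 - 1 = n by ring, show n + 1 - 2 = n - 1 by ring] at h1
  rw [show n + 2 + 1 = n + 3 by ring, show n + 2 + 2 = n + 4 by ring,
    show n + 2 - 1 = n + 1 by ring, show n + 2 - 2 = n by ring] at h2
  rw [show n + 3 + 1 = n + 4 by ring, show n + 3 + 2 = n + 5 by ring,
    show n + 3 - 1 = n + 2 by ring, show n + 3 - 2 = n + 1 by ring] at h3
  -- nonvanishing differences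
  have d1 : z (n + 1) t - z n t ≠ 0 := hne n t
  have d2 : z (n + 2) t - z (n + 1) t ≠ 0 := by
    have := hne (n + 1) t; rwa [show n + 1 + 1 = n + 2 by ring] at this
  have d3 : z (n + 3) t - z (n + 2) t ≠ 0 := by
    have := hne (n + 2) t; rwa [show n + 2 + 1 = n + 3 by ring] at this
  have d4 : z (n + 4) t - z (n + 3) t ≠ 0 := by
    have := hne (n + 3) t; rwa [show n + 3 + 1 = n + 4 by ring] at this
  have d5 : z (n + 5) t - z (n + 4) t ≠ 0 := by
    have := hne (n + 4) t; rwa [show n + 4 + 1 = n + 5 by ring] at this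
  have d0 : z n t - z (n - 1) t ≠ 0 := by
    have := hne (n - 1) t; rwa [show n - 1 + 1 = n by ring] at this
  have dm1 : z (n - 1) t - z (n - 2) t ≠ 0 := by
    have := hne (n - 2) t; rwa [show n - 2 + 1 = n - 1 by ring] at this
  have hD : (z (n + 3) t - z (n + 2) t) * (z (n + 2) t - z (n + 1) t)
      * (z (n + 1) t - z n t) ≠ 0 := mul_ne_zero (mul_ne_zero d3 d2) d1
  -- construct the derivative of u n via the quotient rule
  have hder := (h2.mul h1).div (((h3.sub h2).mul (h2.sub h1)).mul (h1.sub h0)) hD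
  rw [hufun]
  convert hder using 1
  case e'_4 => rfl
  case e'_5 => rfl
  case e'_8 => rfl
  beta_reduce
  rw [hu (n + 2) t, hu (n + 1) t, hu (n - 1) t, hu (n - 2) t,
    show n + 2 + 2 = n + 4 by ring, show n + 2 + 3 = n + 5 by ring,
    show n + 2 + 1 = n + 3 by ring,
    show n + 1 + 2 = n + 3 by ring, show n + 1 + 3 = n + 4 by ring,
    show n + 1 + 1 = n + 2 by ring,
    show n - 1 + 2 = n + 1 by ring, show n - 1 + 3 = n + 2 by ring,
    show n - 1 + 1 = n by ring,
    show n - 2 + 2 = n by ring, show n - 2 + 3 = n + 1 by ring,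
    show n - 2 + 1 = n - 1 by ring]
  have key := inb_key (z (n - 2) t) (z (n - 1) t) (z n t) (z (n + 1) t) (z (n + 2) t)
    (z (n + 3) t) (z (n + 4) t) (z (n + 5) t) d1 d2 d3 d4 d5 d0 dm1
    _ _ _ _ rfl rfl rfl rfl
  simp only [Pi.mul_apply, Pi.sub_apply]
  linear_combination key
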